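/- arXiv:1409.7274 — 3 statements merged into one kernel-verified Lean document; each statement's English description precedes it below -/
import Mathlib

section
/- Let 𝒞 be a triangulated category with a proper class ξ of triangles and enough ξ-projectives. A distinguished triangle A → B → C → ΣA belongs to ξ if and only if for every ξ-projective object P, the induced sequence 0 → Hom(P,A) → Hom(P,B) → Hom(P,C) → 0 of abelian groups is exact. -/
open CategoryTheory CategoryTheory.Limits CategoryTheory.Pretriangulated

namespace GorensteinTriangulated

variable {C : Type*} [Category C] [HasZeroObject C] [HasShift C ℤ] [Preadditive C]
  [∀ n : ℤ, (shiftFunctor C n).Additive] [Pretriangulated C]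

/-- A triangle `A ⟶ B ⟶ C ⟶ ΣA` is split if it is isomorphic to the triangle
`A ⟶ A ⊞ C ⟶ C ⟶ ΣA` with structure maps `(1 0)`, `(0 1)ᵀ` and `0`. -/
def IsSplitTriangle (T : Triangle C) : Prop :=
  Nonempty (T ≅ Triangle.mk (biprod.inl : T.obj₁ ⟶ T.obj₁ ⊞ T.obj₃) biprod.snd
    (0 : T.obj₃ ⟶ T.obj₁⟦(1 : ℤ)⟧))

/-- The triangle `T` becomes a short exact sequence after applying `Hom(Q, -)`. -/
def CoExact (T : Triangle C) (Q : C) : Prop :=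
  Function.Injective (fun φ : Q ⟶ T.obj₁ => φ ≫ T.mor₁) ∧
  (∀ φ : Q ⟶ T.obj₂, φ ≫ T.mor₂ = 0 → ∃ ψ : Q ⟶ T.obj₁, φ = ψ ≫ T.mor₁) ∧
  Function.Surjective (fun φ : Q ⟶ T.obj₂ => φ ≫ T.mor₂)

/-- The triangle `T` becomes a short exact sequence after applying `Hom(-, Q)`. -/
def ContraExact (T : Triangle C) (Q : C) : Prop :=
  Function.Injective (fun φ : T.obj₃ ⟶ Q => T.mor₂ ≫ φ) ∧
  (∀ φ : T.obj₂ ⟶ Q, T.mor₁ ≫ φ = 0 → ∃ ψ : T.obj₃ ⟶ Q, φ = T.mor₂ ≫ ψ) ∧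
  Function.Surjective (fun φ : T.obj₂ ⟶ Q => T.mor₁ ≫ φ)

/-- Saturation of a class of triangles with respect to base change: in a base change
diagram, if the third vertical triangle and the second horizontal triangle are in `S`,
then the original triangle is in `S`. -/
def SaturatedBase (S : Set (Triangle C)) : Prop :=
  ∀ T ∈ (distinguishedTriangles : Set (Triangle C)),
    ∀ (M G E : C) (α : M ⟶ G) (δ : M ⟶ E) (f' : T.obj₁ ⟶ G) (g' : G ⟶ E)
      (h' : E ⟶ T.obj₁⟦(1 : ℤ)⟧) (β : G ⟶ T.obj₂) (ε : E ⟶ T.obj₃)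
      (γ : T.obj₂ ⟶ M⟦(1 : ℤ)⟧) (ζ : T.obj₃ ⟶ M⟦(1 : ℤ)⟧),
      Triangle.mk α β γ ∈ (distinguishedTriangles : Set (Triangle C)) →
      Triangle.mk f' g' h' ∈ S → Triangle.mk δ ε ζ ∈ S →
      α ≫ g' = δ → f' ≫ β = T.mor₁ → g' ≫ ε = β ≫ T.mor₂ → h' = ε ≫ T.mor₃ →
      T.mor₂ ≫ ζ = γ → T ∈ S

/-- Saturation of a class of triangles with respect to cobase change: in a cobase change
diagram, if the second vertical triangle and the third horizontal triangle are in `S`,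
then the original triangle is in `S`. -/
def SaturatedCobase (S : Set (Triangle C)) : Prop :=
  ∀ T ∈ (distinguishedTriangles : Set (Triangle C)),
    ∀ (N D F : C) (ζ : N ⟶ T.obj₁) (δ : N ⟶ T.obj₂) (α : T.obj₁ ⟶ D) (β : T.obj₂ ⟶ F)
      (f' : D ⟶ F) (g' : F ⟶ T.obj₃) (h' : T.obj₃ ⟶ D⟦(1 : ℤ)⟧)
      (η : D ⟶ N⟦(1 : ℤ)⟧) (υ : F ⟶ N⟦(1 : ℤ)⟧),
      Triangle.mk ζ α η ∈ (distinguishedTriangles : Set (Triangle C)) →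
      Triangle.mk δ β υ ∈ S → Triangle.mk f' g' h' ∈ S →
      ζ ≫ T.mor₁ = δ → T.mor₁ ≫ β = α ≫ f' → T.mor₂ = β ≫ g' →
      T.mor₃ ≫ (shiftFunctor C (1 : ℤ)).map α = h' → f' ≫ υ = η → T ∈ S

/-- A proper class of triangles in the sense of Beligiannis. -/
structure IsProperClass (S : Set (Triangle C)) : Prop where
  subset_dist : S ⊆ (distinguishedTriangles : Set (Triangle C))
  split_mem : ∀ T : Triangle C, T ∈ (distinguishedTriangles : Set (Triangle C)) →
    IsSplitTriangle T → T ∈ S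
  iso_closed : ∀ T₁ T₂ : Triangle C, Nonempty (T₁ ≅ T₂) → T₁ ∈ S → T₂ ∈ S
  sum_closed : ∀ T₁ ∈ S, ∀ T₂ ∈ S, ∀ T ∈ (distinguishedTriangles : Set (Triangle C)),
    Nonempty (T.obj₁ ≅ T₁.obj₁ ⊞ T₂.obj₁) →
    (∀ e₁ : T.obj₁ ≅ T₁.obj₁ ⊞ T₂.obj₁, ∀ e₂ : T.obj₂ ≅ T₁.obj₂ ⊞ T₂.obj₂,
      ∀ e₃ : T.obj₃ ≅ T₁.obj₃ ⊞ T₂.obj₃,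
      T.mor₁ = e₁.hom ≫ biprod.map T₁.mor₁ T₂.mor₁ ≫ e₂.inv →
      T.mor₂ = e₂.hom ≫ biprod.map T₁.mor₂ T₂.mor₂ ≫ e₃.inv →
      T.mor₃ = e₃.hom ≫ biprod.desc
        (T₁.mor₃ ≫ (shiftFunctor C (1 : ℤ)).map (biprod.inl ≫ e₁.inv))
        (T₂.mor₃ ≫ (shiftFunctor C (1 : ℤ)).map (biprod.inr ≫ e₁.inv)) → T ∈ S)
  susp_closed : ∀ T ∈ S, ∀ i : ℤ, (Triangle.shiftFunctor C i).obj T ∈ S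
  saturated : SaturatedBase S
  base_change : ∀ T ∈ S, ∀ {E : C} (ε : E ⟶ T.obj₃),
    ∃ (G : C) (f' : T.obj₁ ⟶ G) (g' : G ⟶ E) (h' : E ⟶ T.obj₁⟦(1 : ℤ)⟧) (β : G ⟶ T.obj₂),
      Triangle.mk f' g' h' ∈ S ∧ f' ≫ β = T.mor₁ ∧ g' ≫ ε = β ≫ T.mor₂ ∧ h' = ε ≫ T.mor₃
  cobase_change : ∀ T ∈ S, ∀ {D : C} (α : T.obj₁ ⟶ D),
    ∃ (F : C) (f' : D ⟶ F) (g' : F ⟶ T.obj₃) (h' : T.obj₃ ⟶ D⟦(1 : ℤ)⟧) (β : T.obj₂ ⟶ F),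
      Triangle.mk f' g' h' ∈ S ∧ T.mor₁ ≫ β = α ≫ f' ∧ T.mor₂ = β ≫ g' ∧
      T.mor₃ ≫ (shiftFunctor C (1 : ℤ)).map α = h'

/-- `P` is a `ξ`-projective object. -/
def XiProjective (S : Set (Triangle C)) (P : C) : Prop :=
  ∀ T ∈ S, CoExact T P

/-- `𝒞` has enough `ξ`-projectives. -/
def HasEnoughXiProjectives (S : Set (Triangle C)) : Prop :=
  ∀ A : C, ∃ (K P : C) (f : K ⟶ P) (g : P ⟶ A) (h : A ⟶ K⟦(1 : ℤ)⟧),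
    XiProjective S P ∧ Triangle.mk f g h ∈ S

/-- The objects admitting a complete resolution by triangles in `S` with middle terms in
`X` which are `Hom(-, Y)`-exact; `GClass S X X` is the Gorenstein category `𝒢(X)` and
`GClass S (XiProjective S) (XiProjective S)` is the class of `ξ`-Gorenstein projectives. -/
def GClass (S : Set (Triangle C)) (X Y : C → Prop) (A : C) : Prop :=
  ∃ (K P : ℤ → C) (f : ∀ n : ℤ, K (n + 1) ⟶ P n) (g : ∀ n : ℤ, P n ⟶ K n)
    (h : ∀ n : ℤ, K n ⟶ (K (n + 1))⟦(1 : ℤ)⟧),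
    K 0 = A ∧ ∀ n : ℤ, X (P n) ∧ Triangle.mk (f n) (g n) (h n) ∈ S ∧
      ∀ Q : C, Y Q → ContraExact (Triangle.mk (f n) (g n) (h n)) Q

/-- `ξ`-Gorenstein projective objects. -/
def GProjective (S : Set (Triangle C)) (A : C) : Prop :=
  GClass S (XiProjective S) (XiProjective S) A

/-- A `ξ`-exact resolution `⋯ → X₁ → X₀ → A → 0` with terms satisfying `X`, which is
`Hom(-, Q)`-exact for every `Q` satisfying `Y`. -/
def HasResolution (S : Set (Triangle C)) (X Y : C → Prop) (A : C) : Prop :=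
  ∃ (K G : ℕ → C) (f : ∀ n : ℕ, K (n + 1) ⟶ G n) (g : ∀ n : ℕ, G n ⟶ K n)
    (h : ∀ n : ℕ, K n ⟶ (K (n + 1))⟦(1 : ℤ)⟧),
    K 0 = A ∧ ∀ n : ℕ, X (G n) ∧ Triangle.mk (f n) (g n) (h n) ∈ S ∧
      ∀ Q : C, Y Q → ContraExact (Triangle.mk (f n) (g n) (h n)) Q

/-- A `ξ`-exact coresolution `0 → A → X⁰ → X¹ → ⋯` with terms satisfying `X`, which is
`Hom(-, Q)`-exact for every `Q` satisfying `Y`. -/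
def HasCoresolution (S : Set (Triangle C)) (X Y : C → Prop) (A : C) : Prop :=
  ∃ (K G : ℕ → C) (f : ∀ n : ℕ, K n ⟶ G n) (g : ∀ n : ℕ, G n ⟶ K (n + 1))
    (h : ∀ n : ℕ, K (n + 1) ⟶ (K n)⟦(1 : ℤ)⟧),
    K 0 = A ∧ ∀ n : ℕ, X (G n) ∧ Triangle.mk (f n) (g n) (h n) ∈ S ∧
      ∀ Q : C, Y Q → ContraExact (Triangle.mk (f n) (g n) (h n)) Q

/-- A finite `ξ`-exact sequence `0 → Gₙ → ⋯ → G₀ → A → 0` where the `j`-th term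
satisfies the predicate `X j`. -/
def FiniteRes (S : Set (Triangle C)) (n : ℕ) (X : ℕ → C → Prop) (A : C) : Prop :=
  ∃ (K G : ℕ → C) (f : ∀ j : ℕ, K (j + 1) ⟶ G j) (g : ∀ j : ℕ, G j ⟶ K j)
    (h : ∀ j : ℕ, K j ⟶ (K (j + 1))⟦(1 : ℤ)⟧),
    K 0 = A ∧ IsZero (K (n + 1)) ∧
    ∀ j ≤ n, X j (G j) ∧ Triangle.mk (f j) (g j) (h j) ∈ S

/-- `ξ`-Gorenstein projective dimension of `A` is at most `n`. -/
def GpdLE (S : Set (Triangle C)) (A : C) (n : ℕ) : Prop :=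
  FiniteRes S n (fun _ => GProjective S) A

variable [IsTriangulated C]

theorem mem_xi_iff_coExact (S : Set (Triangle C)) (hS : IsProperClass S)
    (hE : HasEnoughXiProjectives S) (T : Triangle C)
    (hT : T ∈ (distinguishedTriangles : Set (Triangle C))) :
    T ∈ S ↔ ∀ P : C, XiProjective S P → CoExact T P := by
  constructor
  · intro hTS P hP
    exact hP T hTS
  · intro hco
    obtain ⟨K, P, δ, ε, ζ, hPproj, hKS⟩ := hE T.obj₃
    obtain ⟨βt, hβt⟩ := (hco P hPproj).2.2 ε
    simp only at hβt
    set β : T.obj₁ ⊞ P ⟶ T.obj₂ := biprod.desc T.mor₁ βt with hβ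
    obtain ⟨W, v, w, hW⟩ := distinguished_cocone_triangle β
    have comm : (biprod.inl : T.obj₁ ⟶ T.obj₁ ⊞ P) ≫ β = T.mor₁ := biprod.inl_desc _ _
    have hsplit : Triangle.mk (biprod.inl : T.obj₁ ⟶ T.obj₁ ⊞ P) biprod.snd 0 ∈ distTriang C :=
      binaryBiproductTriangle_distinguished T.obj₁ P
    have hT' : Triangle.mk T.mor₁ T.mor₂ T.mor₃ ∈ distTriang C := hT
    have oct := Triangulated.someOctahedron comm hsplit hW hT'
    have hβg : β ≫ T.mor₂ = biprod.snd ≫ ε := by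
      ext
      · simp [hβ, comp_distTriang_mor_zero₁₂ T hT]
      · simp [hβ, hβt]
    have hm₁ : oct.m₁ = ε := by
      have h1 := oct.comm₁
      rw [hβg] at h1
      exact ((cancel_epi (biprod.snd : T.obj₁ ⊞ P ⟶ P)).1 h1.symm).symm
    have hrot : Triangle.mk ε ζ (-δ⟦(1 : ℤ)⟧') ∈ distTriang C :=
      rot_of_distTriang _ (hS.subset_dist hKS)
    obtain ⟨e, he1, he2⟩ := exists_iso_of_arrow_iso _ _ oct.mem hrot
      (Arrow.isoMk (Iso.refl P) (Iso.refl T.obj₃)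
        (by simp [hm₁]; exact (Category.id_comp _).trans (Category.comp_id _).symm))
    change e.hom.hom₁ = 𝟙 P at he1
    change e.hom.hom₂ = 𝟙 T.obj₃ at he2
    set θ : W ≅ K⟦(1 : ℤ)⟧ := Triangle.π₃.mapIso e with hθ
    have he3 : e.hom.hom₃ = θ.hom := rfl
    have hθζ : oct.m₃ ≫ θ.hom = ζ := by
      have hc := e.hom.comm₂
      rw [he2, he3] at hc
      exact hc.trans (Category.id_comp ζ)
    have hθδ : w ≫ (biprod.snd : T.obj₁ ⊞ P ⟶ P)⟦(1 : ℤ)⟧' = θ.hom ≫ (-δ⟦(1 : ℤ)⟧') := by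
      have hc := e.hom.comm₃
      rw [he1, he3] at hc
      exact (by rw [CategoryTheory.Functor.map_id, Category.comp_id] :
        (w ≫ (biprod.snd : T.obj₁ ⊞ P ⟶ P)⟦(1 : ℤ)⟧') ≫ (𝟙 P)⟦(1 : ℤ)⟧' =
          w ≫ (biprod.snd : T.obj₁ ⊞ P ⟶ P)⟦(1 : ℤ)⟧').symm.trans hc
    set w' : K⟦(1 : ℤ)⟧ ⟶ (T.obj₁ ⊞ P)⟦(1 : ℤ)⟧ := θ.inv ≫ w with hw'
    set α : K ⟶ T.obj₁ ⊞ P := -((shiftFunctor C (1 : ℤ)).preimage w') with hα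
    have hαshift : α⟦(1 : ℤ)⟧' = -w' := by
      rw [hα, Functor.map_neg, Functor.map_preimage]
    have hvθ : v ≫ θ.hom = T.mor₂ ≫ ζ := by
      have h3 := oct.comm₃
      rw [← h3, Category.assoc, hθζ]
    have hdist : Triangle.mk α β (T.mor₂ ≫ ζ) ∈ distTriang C := by
      rw [Pretriangulated.rotate_distinguished_triangle]
      refine isomorphic_distinguished _ hW _ ?_
      refine Triangle.isoMk _ _ (Iso.refl _) (Iso.refl _) θ.symm ?_ ?_ ?_
      · exact (Category.comp_id β).trans (Category.id_comp β).symm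
      · exact (by rw [← hvθ, Category.assoc, θ.hom_inv_id, Category.comp_id] :
          (T.mor₂ ≫ ζ) ≫ θ.inv = v).trans (Category.id_comp v).symm
      · exact (by rw [CategoryTheory.Functor.map_id, Category.comp_id, hαshift, neg_neg, hw'] :
          (-α⟦(1 : ℤ)⟧') ≫ (shiftFunctor C (1 : ℤ)).map (𝟙 (T.obj₁ ⊞ P)) = θ.inv ≫ w)
    have hαsnd : α ≫ biprod.snd = δ := by
      apply (shiftFunctor C (1 : ℤ)).map_injective
      rw [Functor.map_comp, hαshift, Preadditive.neg_comp, hw', Category.assoc, hθδ,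
        ← Category.assoc, θ.inv_hom_id, Category.id_comp, neg_neg]
    have hsplitS : Triangle.mk (biprod.inl : T.obj₁ ⟶ T.obj₁ ⊞ P) biprod.snd
        (0 : P ⟶ T.obj₁⟦(1 : ℤ)⟧) ∈ S :=
      hS.split_mem _ hsplit ⟨Iso.refl _⟩
    refine hS.saturated T hT K (T.obj₁ ⊞ P) P α δ biprod.inl biprod.snd 0 β ε
      (T.mor₂ ≫ ζ) ζ hdist hsplitS hKS hαsnd comm hβg.symm ?_ rfl
    rw [← hβt, Category.assoc, comp_distTriang_mor_zero₂₃ T hT, comp_zero]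

end GorensteinTriangulated
end

section
/- Let 𝒞 be a triangulated category with a proper class ξ of triangles and enough ξ-projectives, and let A be an object of 𝒞. Then A is ξ-Gorenstein projective if and only if A has both a ξ-projective resolution which is Hom(−,𝒫(ξ))-exact and a ξ-projective coresolution which is Hom(−,𝒫(ξ))-exact. -/
open CategoryTheory CategoryTheory.Limits CategoryTheory.Pretriangulated

namespace GorensteinTriangulated

variable {C : Type*} [Category C] [HasZeroObject C] [HasShift C ℤ] [Preadditive C]
  [∀ n : ℤ, (shiftFunctor C n).Additive] [Pretriangulated C]

variable [IsTriangulated C]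

lemma tri_eq_aux {X X' Y Z : C} (p : X = X') (f : X' ⟶ Y) (g : Y ⟶ Z)
    (h : Z ⟶ X'⟦(1 : ℤ)⟧) :
    Triangle.mk (eqToHom p ≫ f) g (h ≫ (shiftFunctor C (1 : ℤ)).map (eqToHom p.symm)) =
      Triangle.mk f g h := by
  subst p; simp

theorem gProjective_iff_res_and_cores (S : Set (Triangle C))
    (hS : IsProperClass S) (hE : HasEnoughXiProjectives S) (A : C) :
    GProjective S A ↔
      (HasResolution S (XiProjective S) (XiProjective S) A ∧
        HasCoresolution S (XiProjective S) (XiProjective S) A) := by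
  constructor
  · rintro ⟨K, P, f, g, h, hK0, hProp⟩
    constructor
    · exact ⟨fun n => K n, fun n => P n, fun n => f n, fun n => g n, fun n => h n,
        hK0, fun n => hProp n⟩
    · have pf : ∀ n : ℕ, (match n with | 0 => A | j+1 => K (Int.negSucc j))
          = K (Int.negSucc n + 1) := by
        intro n
        cases n with
        | zero => exact hK0.symm
        | succ k => rfl
      refine ⟨fun n => match n with | 0 => A | j+1 => K (Int.negSucc j),
        fun n => P (Int.negSucc n),
        fun n => eqToHom (pf n) ≫ f (Int.negSucc n),
        fun n => g (Int.negSucc n),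
        fun n => h (Int.negSucc n) ≫ (shiftFunctor C (1 : ℤ)).map (eqToHom (pf n).symm),
        rfl, ?_⟩
      intro n
      rw [tri_eq_aux (pf n) (f (Int.negSucc n)) (g (Int.negSucc n)) (h (Int.negSucc n))]
      exact hProp (Int.negSucc n)
  · rintro ⟨⟨Kr, Gr, fr, gr, hr, hKr, hR⟩, ⟨Kc, Gc, fc, gc, hc, hKc, hC⟩⟩
    have pf : ∀ j : ℕ,
        (match Int.negSucc j + 1 with | Int.ofNat i => Kr i | Int.negSucc i => Kc (i+1))
          = Kc j := by
      intro j
      cases j with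
      | zero => exact hKr.trans hKc.symm
      | succ k => rfl
    refine ⟨fun m => match m with | Int.ofNat j => Kr j | Int.negSucc j => Kc (j+1),
      fun m => match m with | Int.ofNat j => Gr j | Int.negSucc j => Gc j,
      fun n => match n with | Int.ofNat j => fr j | Int.negSucc j => eqToHom (pf j) ≫ fc j,
      fun n => match n with | Int.ofNat j => gr j | Int.negSucc j => gc j,
      fun n => match n with
        | Int.ofNat j => hr j
        | Int.negSucc j => hc j ≫ (shiftFunctor C (1 : ℤ)).map (eqToHom (pf j).symm),
      hKr, ?_⟩
    intro n
    cases n with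
    | ofNat j => exact hR j
    | negSucc j =>
      rw [tri_eq_aux (pf j) (fc j) (gc j) (hc j)]
      exact hC j


end GorensteinTriangulated
end

section
/- Let 𝒞 be a triangulated category and ξ a proper class of triangles in 𝒞. Then ξ is saturated with respect to base change if and only if it is saturated with respect to cobase change: in a base change diagram, whenever the third vertical triangle and the second horizontal triangle are in ξ, so is the original triangle A → B → C → ΣA; equivalently, in a cobase change diagram, whenever the second vertical and the third horizontal triangles are in ξ, so is A → B → C → ΣA. -/
open CategoryTheory CategoryTheory.Limits CategoryTheory.Pretriangulated

namespace GorensteinTriangulated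

variable {C : Type*} [Category C] [HasZeroObject C] [HasShift C ℤ] [Preadditive C]
  [∀ n : ℤ, (shiftFunctor C n).Additive] [Pretriangulated C]

lemma exists_iso_of_eq_mor₃ {X Y Y' Z : C} {u : X ⟶ Y} {v : Y ⟶ Z} {u' : X ⟶ Y'} {v' : Y' ⟶ Z}
    (w : Z ⟶ X⟦(1 : ℤ)⟧)
    (h₁ : Triangle.mk u v w ∈ (distinguishedTriangles : Set (Triangle C)))
    (h₂ : Triangle.mk u' v' w ∈ (distinguishedTriangles : Set (Triangle C))) :
    ∃ e : Y ≅ Y', u ≫ e.hom = u' ∧ e.hom ≫ v' = v := by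
  have h₁' := rot_of_distTriang _ (rot_of_distTriang _ h₁)
  have h₂' := rot_of_distTriang _ (rot_of_distTriang _ h₂)
  have comm : (Triangle.mk u v w).rotate.rotate.mor₁ ≫ (Iso.refl (X⟦(1:ℤ)⟧)).hom
      = (Iso.refl Z).hom ≫ (Triangle.mk u' v' w).rotate.rotate.mor₁ := by
      dsimp only [Triangle.rotate, Triangle.mk, Iso.refl]; simp
  let I := isoTriangleOfIso₁₂ _ _ h₁' h₂' (Iso.refl Z) (Iso.refl (X⟦(1:ℤ)⟧)) comm
  have c2 := I.hom.comm₂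
  have c3 := I.hom.comm₃
  have hom₂ : I.hom.hom₂ = 𝟙 _ := rfl
  let c : (Y⟦(1:ℤ)⟧) ≅ (Y'⟦(1:ℤ)⟧) := Triangle.π₃.mapIso I
  have hch : c.hom = I.hom.hom₃ := rfl
  refine ⟨(shiftFunctor C (1:ℤ)).preimageIso c, ?_, ?_⟩
  · apply (shiftFunctor C (1:ℤ)).map_injective
    rw [Functor.map_comp]
    rw [show (shiftFunctor C (1:ℤ)).map ((shiftFunctor C (1:ℤ)).preimageIso c).hom = c.hom from
      (shiftFunctor C (1:ℤ)).map_preimage _, hch]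
    rw [hom₂] at c2
    dsimp [Triangle.rotate, Triangle.mk] at c2
    simp only [Preadditive.neg_comp, Category.id_comp, Category.comp_id, neg_inj] at c2
    exact c2
  · apply (shiftFunctor C (1:ℤ)).map_injective
    rw [Functor.map_comp]
    rw [show (shiftFunctor C (1:ℤ)).map ((shiftFunctor C (1:ℤ)).preimageIso c).hom = c.hom from
      (shiftFunctor C (1:ℤ)).map_preimage _, hch]
    have hom₁ : I.hom.hom₁ = 𝟙 _ := rfl
    rw [hom₁] at c3
    dsimp [Triangle.rotate, Triangle.mk] at c3
    simp only [CategoryTheory.Functor.map_id, Category.comp_id, Preadditive.neg_comp,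
      Preadditive.comp_neg, neg_inj] at c3
    exact c3.symm

lemma distinguished_of_shift {X Y Z : C} (u : X ⟶ Y) (v : Y ⟶ Z) (w : Z ⟶ X⟦(1 : ℤ)⟧)
    (H : Triangle.mk ((shiftFunctor C (1:ℤ)).map u) ((shiftFunctor C (1:ℤ)).map v)
      (-((shiftFunctor C (1:ℤ)).map w)) ∈ (distinguishedTriangles : Set (Triangle C))) :
    Triangle.mk u v w ∈ (distinguishedTriangles : Set (Triangle C)) := by
  set T : Triangle C := Triangle.mk u v w with hT
  have h1 : (CategoryTheory.shiftFunctor (Triangle C) (1:ℤ)).obj T ∈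
      (distinguishedTriangles : Set (Triangle C)) := by
    refine isomorphic_distinguished _ H _ ?_
    refine Triangle.isoMk _ _ (-(Iso.refl _)) (Iso.refl _) (-(Iso.refl _)) ?_ ?_ ?_
    · change ((1:ℤ).negOnePow • (shiftFunctor C (1:ℤ)).map u) ≫ 𝟙 _ =
        (-𝟙 ((shiftFunctor C (1:ℤ)).obj X)) ≫ (shiftFunctor C (1:ℤ)).map u; simp
    · change ((1:ℤ).negOnePow • (shiftFunctor C (1:ℤ)).map v) ≫ (-𝟙 ((shiftFunctor C (1:ℤ)).obj Z)) =
        𝟙 _ ≫ (shiftFunctor C (1:ℤ)).map v; simp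
    · change ((1:ℤ).negOnePow • ((shiftFunctor C (1:ℤ)).map w ≫ (shiftFunctorComm C 1 1).hom.app X)) ≫
        (shiftFunctor C (1:ℤ)).map (-𝟙 ((shiftFunctor C (1:ℤ)).obj X)) =
        (-𝟙 ((shiftFunctor C (1:ℤ)).obj Z)) ≫ (-(shiftFunctor C (1:ℤ)).map w)
      simp [shiftFunctorComm_eq_refl]
  have h2 := Triangle.shift_distinguished _ h1 (-1)
  exact isomorphic_distinguished _ h2 _ ((shiftEquiv (Triangle C) (1:ℤ)).unitIso.app T)

lemma mem_of_eq_mor₃ {S : Set (Triangle C)}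
    (h_iso : ∀ T₁ T₂ : Triangle C, Nonempty (T₁ ≅ T₂) → T₁ ∈ S → T₂ ∈ S)
    {X Y Y' Z : C} {u : X ⟶ Y} {v : Y ⟶ Z} {u' : X ⟶ Y'} {v' : Y' ⟶ Z}
    (w : Z ⟶ X⟦(1 : ℤ)⟧)
    (hc : Triangle.mk u v w ∈ (distinguishedTriangles : Set (Triangle C)))
    (hwd : Triangle.mk u' v' w ∈ (distinguishedTriangles : Set (Triangle C)))
    (hw : Triangle.mk u' v' w ∈ S) :
    Triangle.mk u v w ∈ S := by
  obtain ⟨e, he₁, he₂⟩ := exists_iso_of_eq_mor₃ w hwd hc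
  refine h_iso _ _ ⟨Triangle.isoMk _ _ (Iso.refl X) e (Iso.refl Z) ?_ ?_ ?_⟩ hw
  · dsimp [Triangle.mk]; rw [Category.id_comp]; exact he₁
  · dsimp [Triangle.mk]; rw [Category.comp_id]; exact he₂.symm
  · dsimp [Triangle.mk]; simp


variable [IsTriangulated C]

theorem saturatedBase_iff_saturatedCobase (S : Set (Triangle C))
    (h_dist : S ⊆ (distinguishedTriangles : Set (Triangle C)))
    (h_iso : ∀ T₁ T₂ : Triangle C, Nonempty (T₁ ≅ T₂) → T₁ ∈ S → T₂ ∈ S)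
    (h_susp : ∀ T ∈ S, ∀ i : ℤ, (Triangle.shiftFunctor C i).obj T ∈ S)
    (h_base : ∀ T ∈ S, ∀ {E : C} (ε : E ⟶ T.obj₃),
      ∃ (G : C) (f' : T.obj₁ ⟶ G) (g' : G ⟶ E) (h' : E ⟶ T.obj₁⟦(1 : ℤ)⟧) (β : G ⟶ T.obj₂),
        Triangle.mk f' g' h' ∈ S ∧ f' ≫ β = T.mor₁ ∧ g' ≫ ε = β ≫ T.mor₂ ∧ h' = ε ≫ T.mor₃)
    (h_cobase : ∀ T ∈ S, ∀ {D : C} (α : T.obj₁ ⟶ D),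
      ∃ (F : C) (f' : D ⟶ F) (g' : F ⟶ T.obj₃) (h' : T.obj₃ ⟶ D⟦(1 : ℤ)⟧) (β : T.obj₂ ⟶ F),
        Triangle.mk f' g' h' ∈ S ∧ T.mor₁ ≫ β = α ≫ f' ∧ T.mor₂ = β ≫ g' ∧
        T.mor₃ ≫ (shiftFunctor C (1 : ℤ)).map α = h') :
    SaturatedBase S ↔ SaturatedCobase S := by
  constructor
  · intro hb
    intro T hT N D F ζ δ α β f' g' h' η υ hcol1 hcol2 hrow3 e1 e2 e3 e4 e5
    have hT' : Triangle.mk T.mor₁ T.mor₂ T.mor₃ ∈ (distinguishedTriangles : Set (Triangle C)) := hT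
    -- first octahedron, on (ζ, T.mor₁)
    have O := Triangulated.someOctahedron (u₁₂ := ζ) (u₂₃ := T.mor₁) (u₁₃ := δ) e1 hcol1 hT' (h_dist hcol2)
    have memT : Triangle.mk O.m₁ O.m₃ h' ∈ (distinguishedTriangles : Set (Triangle C)) := by
      have := O.mem
      rwa [e4] at this
    obtain ⟨θ, hθ₁, hθ₂⟩ := exists_iso_of_eq_mor₃ h' memT (h_dist hrow3)
    -- cobase change of (N, B, F) along ζ
    obtain ⟨F₀, p, q, r, s, hF₀, c1, c2, c3⟩ := h_cobase _ hcol2 ζ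
    -- base change of (A, F₀, F) along θ.inv
    obtain ⟨G₉, f₉, g₉, h₉, t₉, hW, w1, w2, w3⟩ := h_base _ hF₀ θ.inv
    have key : h₉ = g' ≫ T.mor₃ := by
      have c3' : υ ≫ (shiftFunctor C (1:ℤ)).map ζ = r := c3
      have cm4 : υ ≫ (shiftFunctor C (1:ℤ)).map ζ = O.m₃ ≫ T.mor₃ := O.comm₄
      rw [w3]
      show θ.inv ≫ r = _
      rw [← c3', cm4, ← hθ₂]
      simp
    -- second octahedron, on (g', T.mor₃)
    have h12 : Triangle.mk g' h' (-((shiftFunctor C (1:ℤ)).map f')) ∈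
        (distinguishedTriangles : Set (Triangle C)) := rot_of_distTriang _ (h_dist hrow3)
    have h23 : Triangle.mk T.mor₃ (-((shiftFunctor C (1:ℤ)).map T.mor₁))
        (-((shiftFunctor C (1:ℤ)).map T.mor₂)) ∈ (distinguishedTriangles : Set (Triangle C)) :=
      rot_of_distTriang _ (rot_of_distTriang _ hT)
    have h13 : Triangle.mk h₉ (-((shiftFunctor C (1:ℤ)).map f₉))
        (-((shiftFunctor C (1:ℤ)).map g₉)) ∈ (distinguishedTriangles : Set (Triangle C)) :=
      rot_of_distTriang _ (rot_of_distTriang _ (h_dist hW))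
    have O₂ := Triangulated.someOctahedron (u₁₂ := g') (u₂₃ := T.mor₃) (u₁₃ := h₉) key.symm h12 h23 h13
    set α₉ : D ⟶ G₉ := (shiftFunctor C (1:ℤ)).preimage O₂.m₁ with hα₉def
    set β₉ : G₉ ⟶ T.obj₂ := (shiftFunctor C (1:ℤ)).preimage O₂.m₃ with hβ₉def
    have hα₉ : (shiftFunctor C (1:ℤ)).map α₉ = O₂.m₁ := (shiftFunctor C (1:ℤ)).map_preimage _
    have hβ₉ : (shiftFunctor C (1:ℤ)).map β₉ = O₂.m₃ := (shiftFunctor C (1:ℤ)).map_preimage _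
    have ha : α₉ ≫ g₉ = f' := by
      apply (shiftFunctor C (1:ℤ)).map_injective
      rw [Functor.map_comp, hα₉]
      have h2 := O₂.comm₂
      simp only [Preadditive.comp_neg, neg_eq_iff_eq_neg, neg_neg] at h2
      exact h2
    have hf : f₉ ≫ β₉ = T.mor₁ := by
      apply (shiftFunctor C (1:ℤ)).map_injective
      rw [Functor.map_comp, hβ₉]
      have h3 : (-((shiftFunctor C (1:ℤ)).map f₉)) ≫ O₂.m₃ = -((shiftFunctor C (1:ℤ)).map T.mor₁) :=
        O₂.comm₃
      simp only [Preadditive.neg_comp, neg_inj] at h3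
      exact neg_inj.mp h3
    have hg : g₉ ≫ g' = β₉ ≫ T.mor₂ := by
      apply (shiftFunctor C (1:ℤ)).map_injective
      rw [Functor.map_comp, Functor.map_comp, hβ₉]
      have h4 := O₂.comm₄
      simp only [Preadditive.neg_comp, Preadditive.comp_neg, neg_inj] at h4
      exact h4
    have hcol2' : Triangle.mk α₉ β₉ (T.mor₂ ≫ h') ∈ (distinguishedTriangles : Set (Triangle C)) := by
      refine distinguished_of_shift _ _ _ ?_
      have := O₂.mem
      rw [← hα₉, ← hβ₉] at this
      have heq : (-((shiftFunctor C (1:ℤ)).map T.mor₂)) ≫ (shiftFunctor C (1:ℤ)).map h'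
          = -((shiftFunctor C (1:ℤ)).map (T.mor₂ ≫ h')) := by
        simp [Functor.map_comp]
      rwa [heq] at this
    exact hb T hT D G₉ F α₉ f' f₉ g₉ h₉ β₉ g' (T.mor₂ ≫ h') h' hcol2' hW hrow3 ha hf hg key rfl
  · intro hc
    intro T hT M G E α δ f' g' h' β ε γ ζ hcol2 hrow1 hcol3 r1 r2 r3 r4 r5
    -- step 1 : complete the third map δ ≫ h' into a distinguished triangle
    obtain ⟨X₆, ζ₆, α₆, hcol1₆⟩ := distinguished_cocone_triangle₂ (δ ≫ h')
    -- step 2 : octahedron on (g', ε)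
    obtain ⟨W₆, t₁, t₂, hW₆⟩ := distinguished_cocone_triangle (g' ≫ ε)
    have h12 : Triangle.mk g' h' (-((shiftFunctor C (1:ℤ)).map f')) ∈
        (distinguishedTriangles : Set (Triangle C)) := rot_of_distTriang _ (h_dist hrow1)
    have h23 : Triangle.mk ε ζ (-((shiftFunctor C (1:ℤ)).map δ)) ∈
        (distinguishedTriangles : Set (Triangle C)) := rot_of_distTriang _ (h_dist hcol3)
    have O := Triangulated.someOctahedron (u₁₂ := g') (u₂₃ := ε) (u₁₃ := g' ≫ ε) rfl h12 h23 hW₆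
    -- step 3 : compare W₆ with X₆⟦1⟧
    have hmem : Triangle.mk O.m₁ O.m₃
        (-((shiftFunctor C (1:ℤ)).map (δ ≫ h'))) ∈
        (distinguishedTriangles : Set (Triangle C)) := by
      have := O.mem
      have heq : (-((shiftFunctor C (1:ℤ)).map δ)) ≫ (shiftFunctor C (1:ℤ)).map h'
          = -((shiftFunctor C (1:ℤ)).map (δ ≫ h')) := by
        simp [Functor.map_comp]
      rwa [heq] at this
    have hS1 : Triangle.mk (-((shiftFunctor C (1:ℤ)).map ζ₆)) (-((shiftFunctor C (1:ℤ)).map α₆))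
        (-((shiftFunctor C (1:ℤ)).map (δ ≫ h'))) ∈
        (distinguishedTriangles : Set (Triangle C)) := by
      have h1 := Triangle.shift_distinguished _ hcol1₆ 1
      refine isomorphic_distinguished _ h1 _ ?_
      refine Triangle.isoMk _ _ (Iso.refl _) (Iso.refl _) (Iso.refl _) ?_ ?_ ?_
      · change (-(shiftFunctor C (1:ℤ)).map ζ₆) ≫ 𝟙 _ = 𝟙 _ ≫ ((1:ℤ).negOnePow • (shiftFunctor C (1:ℤ)).map ζ₆)
        simp
      · change (-(shiftFunctor C (1:ℤ)).map α₆) ≫ 𝟙 _ = 𝟙 _ ≫ ((1:ℤ).negOnePow • (shiftFunctor C (1:ℤ)).map α₆)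
        simp
      · change (-(shiftFunctor C (1:ℤ)).map (δ ≫ h')) ≫ (shiftFunctor C (1:ℤ)).map (𝟙 _) = 𝟙 _ ≫
          ((1:ℤ).negOnePow • ((shiftFunctor C (1:ℤ)).map (δ ≫ h') ≫ (shiftFunctorComm C 1 1).hom.app T.obj₁))
        simp [shiftFunctorComm_eq_refl]
    obtain ⟨e, he₁, he₂⟩ := exists_iso_of_eq_mor₃ _ hmem hS1
    -- φ := -e.hom
    have hφ₁ : O.m₁ ≫ (-e.hom) = (shiftFunctor C (1:ℤ)).map ζ₆ := by
      rw [Preadditive.comp_neg, he₁, neg_neg]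
    have hφ₂ : (-e.hom) ≫ (shiftFunctor C (1:ℤ)).map α₆ = O.m₃ := by
      rw [Preadditive.neg_comp, ← Preadditive.comp_neg]; exact he₂
    -- step 4 : define μ₁, μ₃ and T₆
    set μ₃ : T.obj₃ ⟶ X₆⟦(1:ℤ)⟧ := t₁ ≫ (-e.hom) with hμ₃
    set μ₁ : X₆ ⟶ G := (shiftFunctor C (1:ℤ)).preimage (e.inv ≫ t₂) with hμ₁def
    have hμ₁ : (shiftFunctor C (1:ℤ)).map μ₁ = e.inv ≫ t₂ :=
      (shiftFunctor C (1:ℤ)).map_preimage _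
    have hT₆ : Triangle.mk μ₁ (g' ≫ ε) μ₃ ∈ (distinguishedTriangles : Set (Triangle C)) := by
      rw [rotate_distinguished_triangle]
      refine isomorphic_distinguished _ hW₆ _ ?_
      refine Triangle.isoMk _ _ (Iso.refl _) (Iso.refl _)
        (⟨-e.hom, -e.inv, by simp, by simp⟩ : W₆ ≅ _).symm ?_ ?_ ?_
      · change (g' ≫ ε) ≫ 𝟙 _ = 𝟙 _ ≫ (g' ≫ ε); simp
      · change μ₃ ≫ (-e.inv) = 𝟙 _ ≫ t₁
        rw [hμ₃]
        simp
      · change (-(shiftFunctor C (1:ℤ)).map μ₁) ≫ (shiftFunctor C (1:ℤ)).map (𝟙 _) = (-e.inv) ≫ t₂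
        simp [hμ₁]
    -- step 5 : the relations for T₆
    have ra : ζ₆ ≫ μ₁ = f' := by
      apply (shiftFunctor C (1:ℤ)).map_injective
      rw [Functor.map_comp, hμ₁, ← hφ₁, Category.assoc]
      have h2 := O.comm₂
      calc O.m₁ ≫ (-e.hom) ≫ e.inv ≫ t₂
          = -(O.m₁ ≫ t₂) := by simp
        _ = (shiftFunctor C (1:ℤ)).map f' := by rw [h2]; simp
    have rb : μ₁ ≫ g' = α₆ ≫ δ := by
      apply (shiftFunctor C (1:ℤ)).map_injective
      rw [Functor.map_comp, Functor.map_comp, hμ₁, Category.assoc]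
      have h4 := O.comm₄
      rw [h4, ← hφ₂]
      simp
    have rd : μ₃ ≫ (shiftFunctor C (1:ℤ)).map α₆ = ζ := by
      have h3 := O.comm₃
      rw [hμ₃, Category.assoc, hφ₂]
      exact h3
    -- step 6 : apply saturation with respect to cobase change to T₆
    have hT₆S : Triangle.mk μ₁ (g' ≫ ε) μ₃ ∈ S := by
      refine hc _ hT₆ T.obj₁ M E ζ₆ f' α₆ g' δ ε ζ (δ ≫ h') h' hcol1₆ hrow1 hcol3
        ra rb rfl rd rfl
    -- step 7 : lift T.mor₃ through μ₃
    have hz : (g' ≫ ε) ≫ T.mor₃ = 0 := by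
      rw [Category.assoc, ← r4]
      exact comp_distTriang_mor_zero₂₃ _ (h_dist hrow1)
    obtain ⟨g₀, hg₀⟩ := Triangle.yoneda_exact₂ _ (rot_of_distTriang _ hT₆) T.mor₃ hz
    set c' : X₆ ⟶ T.obj₁ := (shiftFunctor C (1:ℤ)).preimage g₀ with hc'def
    have hc' : (shiftFunctor C (1:ℤ)).map c' = g₀ := (shiftFunctor C (1:ℤ)).map_preimage _
    -- step 8 : cobase change of T₆ along c'
    obtain ⟨Bf, r₁, r₂, r₃, sf, hVF, hv1, hv2, hv3⟩ := h_cobase _ hT₆S c'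
    have hr₃ : r₃ = T.mor₃ := by
      rw [← hv3]; change μ₃ ≫ (shiftFunctor C (1:ℤ)).map c' = _; rw [hc']
      exact hg₀.symm
    rw [hr₃] at hVF
    -- step 9 : conclude
    have : Triangle.mk T.mor₁ T.mor₂ T.mor₃ ∈ S :=
      mem_of_eq_mor₃ h_iso T.mor₃ hT (h_dist hVF) hVF
    exact this

end GorensteinTriangulated
end
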